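/- With the convergents p_k/q_k of a continued fraction with digits (c_k)_{k≥1} and the periods W_k defined from the mechanical words, one has W_0 = 0 (the one-letter word 0), W_1 = 0^{c_1−1}1 (the word consisting of c_1 − 1 zeros followed by a single 1), and for every k ≥ 2: W_k = W_{k−2} · W_{k−1}^{c_k} if k is even, and W_k = W_{k−1}^{c_k} · W_{k−2} if k is odd, where juxtaposition denotes concatenation of words and W^c denotes c-fold concatenation. -/

import Mathlib

/-- Numerators of the convergents of a continued fraction with digits `c 1, c 2, …`,
with shifted index: `pConv c 0 = p₋₁ = 1`, `pConv c (k+1) = p_k`. -/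
def pConv (c : ℕ → ℕ) : ℕ → ℤ
  | 0 => 1
  | 1 => 0
  | (k + 2) => (c (k + 1) : ℤ) * pConv c (k + 1) + pConv c k

/-- Denominators of the convergents, with shifted index: `qConv c 0 = q₋₁ = 0`,
`qConv c (k+1) = q_k`. -/
def qConv (c : ℕ → ℕ) : ℕ → ℤ
  | 0 => 0
  | 1 => 1
  | (k + 2) => (c (k + 1) : ℤ) * qConv c (k + 1) + qConv c k

/-- The period `W_k` of the mechanical word of slope `p_k / q_k`: the word of
length `q_k` whose `i`-th letter is `⌊(i+1)·p_k/q_k⌋ - ⌊i·p_k/q_k⌋`. -/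
def sturmWord (c : ℕ → ℕ) (k : ℕ) : List ℤ :=
  (List.range (qConv c (k + 1)).toNat).map fun i =>
    ⌊((i : ℚ) + 1) * (pConv c (k + 1) : ℚ) / (qConv c (k + 1) : ℚ)⌋ -
      ⌊(i : ℚ) * (pConv c (k + 1) : ℚ) / (qConv c (k + 1) : ℚ)⌋

private lemma fl_eq (n p q X : ℤ) (hq : 0 < q) (h1 : X * q ≤ n * p) (h2 : n * p < (X + 1) * q) :
    ⌊(n : ℚ) * p / q⌋ = X := by
  have hq' : (0:ℚ) < q := by exact_mod_cast hq
  rw [Int.floor_eq_iff]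
  constructor
  · rw [le_div_iff₀ hq']; exact_mod_cast h1
  · rw [div_lt_iff₀ hq']
    have : ((n * p : ℤ) : ℚ) < ((X + 1) * q : ℤ) := by exact_mod_cast h2
    push_cast at this ⊢; linarith

private lemma fl_lb (n p q : ℤ) (hq : 0 < q) : ⌊(n : ℚ) * p / q⌋ * q ≤ n * p := by
  have hq' : (0:ℚ) < q := by exact_mod_cast hq
  have h := Int.floor_le ((n:ℚ) * p / q)
  rw [le_div_iff₀ hq'] at h
  exact_mod_cast h

private lemma fl_ub (n p q : ℤ) (hq : 0 < q) : n * p < (⌊(n : ℚ) * p / q⌋ + 1) * q := by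
  have hq' : (0:ℚ) < q := by exact_mod_cast hq
  have h := Int.lt_floor_add_one ((n:ℚ) * p / q)
  rw [div_lt_iff₀ hq'] at h
  have : (n:ℚ) * p < ((⌊(n : ℚ) * p / q⌋ + 1 : ℤ) : ℚ) * q := by push_cast; linarith
  exact_mod_cast this

private lemma qConv_nonneg (c : ℕ → ℕ) : ∀ k, 0 ≤ qConv c k
  | 0 => le_refl 0
  | 1 => by norm_num [qConv]
  | (k+2) => by
    have h1 := qConv_nonneg c (k+1)
    have h0 := qConv_nonneg c k
    have hc : (0:ℤ) ≤ (c (k+1) : ℤ) := Int.natCast_nonneg _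
    have e : qConv c (k+2) = (c (k + 1) : ℤ) * qConv c (k + 1) + qConv c k := rfl
    nlinarith

private lemma qConv_pos (c : ℕ → ℕ) (hc : ∀ k, 1 ≤ k → 1 ≤ c k) : ∀ k, 0 < qConv c (k+1)
  | 0 => by norm_num [qConv]
  | (k+1) => by
    have h1 := qConv_pos c hc k
    have h0 := qConv_nonneg c k
    have hck : (1:ℤ) ≤ (c (k+1) : ℤ) := by exact_mod_cast hc (k+1) (by omega)
    have e : qConv c (k+2) = (c (k + 1) : ℤ) * qConv c (k + 1) + qConv c k := rfl
    nlinarith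

private lemma qConv_mono (c : ℕ → ℕ) (hc : ∀ k, 1 ≤ k → 1 ≤ c k) (k : ℕ) :
    qConv c (k+1) ≤ qConv c (k+2) := by
  have h1 := qConv_pos c hc k
  have h0 := qConv_nonneg c k
  have hck : (1:ℤ) ≤ (c (k+1) : ℤ) := by exact_mod_cast hc (k+1) (by omega)
  have e : qConv c (k+2) = (c (k + 1) : ℤ) * qConv c (k + 1) + qConv c k := rfl
  nlinarith

private lemma detConv (c : ℕ → ℕ) :
    ∀ k : ℕ, pConv c (k+1) * qConv c k - pConv c k * qConv c (k+1) = (-1)^(k+1)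
  | 0 => by norm_num [pConv, qConv]
  | (k+1) => by
    have ih := detConv c k
    have ep : pConv c (k+2) = (c (k + 1) : ℤ) * pConv c (k + 1) + pConv c k := rfl
    have eq : qConv c (k+2) = (c (k + 1) : ℤ) * qConv c (k + 1) + qConv c k := rfl
    rw [ep, eq]
    ring_nf
    ring_nf at ih
    linear_combination -ih

private def letter (p q : ℤ) (i : ℕ) : ℤ :=
  ⌊((i : ℚ) + 1) * (p : ℚ) / (q : ℚ)⌋ - ⌊(i : ℚ) * (p : ℚ) / (q : ℚ)⌋

private lemma map_letter_seg (p q p₀ q₀ B : ℤ) (s L : ℕ)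
    (H : ∀ j : ℕ, j ≤ L → ⌊((s + j : ℕ) : ℚ) * p / q⌋ = B + ⌊((j : ℕ) : ℚ) * p₀ / q₀⌋) :
    (List.range L).map (fun j => letter p q (s + j)) = (List.range L).map (letter p₀ q₀) := by
  apply List.map_congr_left
  intro a ha
  rw [List.mem_range] at ha
  unfold letter
  have c1 : ((s + a : ℕ) : ℚ) + 1 = ((s + (a+1) : ℕ) : ℚ) := by push_cast; ring
  have c2 : ((a : ℕ) : ℚ) + 1 = (((a+1) : ℕ) : ℚ) := by push_cast; ring
  rw [c1, c2, H (a+1) ha, H a (le_of_lt ha)]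
  ring

-- even k, middle blocks
private lemma floorD (p q p' q' p'' q'' cc m j f : ℤ)
    (hq : 0 < q) (hq' : 0 < q') (hq'' : 0 < q'')
    (hrec : q = cc * q' + q'')
    (e1 : p * q' - p' * q = -1) (e2 : p * q'' - p'' * q = cc)
    (hm0 : 0 ≤ m) (hm1 : m ≤ cc - 1) (hj0 : 0 ≤ j) (hj1 : j ≤ q')
    (hf1 : f * q' ≤ j * p') (hf2 : j * p' < (f + 1) * q') :
    ⌊((q'' + m * q' + j : ℤ) : ℚ) * p / q⌋ = p'' + m * p' + f := by
  apply fl_eq _ _ _ _ hq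
  · have key : ((q'' + m*q' + j)*p - (p'' + m*p' + f)*q) * q'
        = (cc - m)*q' - j + (j*p' - f*q')*q := by linear_combination q' * e2 + (m*q'+j) * e1
    have h1 : 0 ≤ ((q'' + m*q' + j)*p - (p'' + m*p' + f)*q) * q' := by
      rw [key]
      nlinarith [mul_nonneg (show (0:ℤ) ≤ j*p' - f*q' by linarith) hq.le,
        mul_le_mul_of_nonneg_right (show (1:ℤ) ≤ cc - m by linarith) hq'.le]
    nlinarith
  · have key : ((q'' + m*q' + j)*p - (p'' + m*p' + f)*q) * q'
        = (cc - m)*q' - j + (j*p' - f*q')*q := by linear_combination q' * e2 + (m*q'+j) * e1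
    have h1 : ((q'' + m*q' + j)*p - (p'' + m*p' + f)*q) * q' < q * q' := by
      rw [key]
      nlinarith [mul_le_mul_of_nonneg_right (show j*p' - f*q' ≤ q' - 1 by linarith) hq.le,
        mul_le_mul_of_nonneg_right (show cc - m ≤ cc by linarith) hq'.le]
    nlinarith

-- even k, prefix
private lemma floorC (p q p' q' p'' q'' cc i f : ℤ)
    (hq : 0 < q) (hq' : 0 < q') (hq'' : 0 < q'') (hmon : q'' ≤ q')
    (hrec : q = cc * q' + q'') (hcc : 1 ≤ cc)
    (e2 : p * q'' - p'' * q = cc)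
    (hi0 : 0 ≤ i) (hi1 : i ≤ q'')
    (hf1 : f * q'' ≤ i * p'') (hf2 : i * p'' < (f + 1) * q'') :
    ⌊((i : ℤ) : ℚ) * p / q⌋ = f := by
  apply fl_eq _ _ _ _ hq
  · have key : (i*p - f*q) * q'' = (i*p'' - f*q'')*q + i*cc := by linear_combination i * e2
    have h1 : 0 ≤ (i*p - f*q) * q'' := by
      rw [key]
      nlinarith [mul_nonneg (show (0:ℤ) ≤ i*p'' - f*q'' by linarith) hq.le,
        mul_nonneg hi0 (show (0:ℤ) ≤ cc by linarith)]
    nlinarith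
  · have key : (i*p - f*q) * q'' = (i*p'' - f*q'')*q + i*cc := by linear_combination i * e2
    have h1 : (i*p - f*q) * q'' < q * q'' := by
      rw [key]
      nlinarith [mul_le_mul_of_nonneg_right (show i*p'' - f*q'' ≤ q'' - 1 by linarith) hq.le,
        mul_le_mul_of_nonneg_right hi1 (show (0:ℤ) ≤ cc by linarith),
        mul_le_mul_of_nonneg_right hmon (show (0:ℤ) ≤ cc by linarith)]
    nlinarith

-- odd k, leading blocks
private lemma floorA (p q p' q' cc m j f : ℤ)
    (hq : 0 < q) (hq' : 0 < q') (hq'' : 0 < q - cc * q')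
    (e1 : p * q' - p' * q = 1)
    (hm0 : 0 ≤ m) (hm1 : m ≤ cc - 1) (hj0 : 0 ≤ j) (hj1 : j ≤ q')
    (hf1 : f * q' ≤ j * p') (hf2 : j * p' < (f + 1) * q') :
    ⌊((m * q' + j : ℤ) : ℚ) * p / q⌋ = m * p' + f := by
  apply fl_eq _ _ _ _ hq
  · have key : ((m*q' + j)*p - (m*p' + f)*q) * q' = m*q' + j + (j*p' - f*q')*q := by
      linear_combination (m*q'+j) * e1
    have h1 : 0 ≤ ((m*q' + j)*p - (m*p' + f)*q) * q' := by
      rw [key]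
      nlinarith [mul_nonneg (show (0:ℤ) ≤ j*p' - f*q' by linarith) hq.le,
        mul_nonneg hm0 hq'.le]
    nlinarith
  · have key : ((m*q' + j)*p - (m*p' + f)*q) * q' = m*q' + j + (j*p' - f*q')*q := by
      linear_combination (m*q'+j) * e1
    have h1 : ((m*q' + j)*p - (m*p' + f)*q) * q' < q * q' := by
      rw [key]
      nlinarith [mul_le_mul_of_nonneg_right (show j*p' - f*q' ≤ q' - 1 by linarith) hq.le,
        mul_le_mul_of_nonneg_right hm1 hq'.le]
    nlinarith

-- odd k, suffix
private lemma floorB (p q p' q' p'' q'' cc j f : ℤ)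
    (hq : 0 < q) (hq' : 0 < q') (hq'' : 0 < q'') (hmon : q'' ≤ q')
    (hrec : q = cc * q' + q'') (hcc : 1 ≤ cc)
    (e1 : p * q' - p' * q = 1) (e2 : p * q'' - p'' * q = -cc)
    (hj0 : 0 ≤ j) (hj1 : j ≤ q'')
    (hf1 : f * q'' ≤ j * p'') (hf2 : j * p'' < (f + 1) * q'') :
    ⌊((cc * q' + j : ℤ) : ℚ) * p / q⌋ = cc * p' + f := by
  apply fl_eq _ _ _ _ hq
  · have key : ((cc*q' + j)*p - (cc*p' + f)*q) * q'' = cc*(q'' - j) + (j*p'' - f*q'')*q := by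
      linear_combination cc*q''*e1 + j * e2
    have h1 : 0 ≤ ((cc*q' + j)*p - (cc*p' + f)*q) * q'' := by
      rw [key]
      nlinarith [mul_nonneg (show (0:ℤ) ≤ j*p'' - f*q'' by linarith) hq.le,
        mul_nonneg (show (0:ℤ) ≤ cc by linarith) (show (0:ℤ) ≤ q'' - j by linarith)]
    nlinarith
  · have key : ((cc*q' + j)*p - (cc*p' + f)*q) * q'' = cc*(q'' - j) + (j*p'' - f*q'')*q := by
      linear_combination cc*q''*e1 + j * e2
    have h1 : ((cc*q' + j)*p - (cc*p' + f)*q) * q'' < q * q'' := by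
      rw [key]
      nlinarith [mul_le_mul_of_nonneg_right (show j*p'' - f*q'' ≤ q'' - 1 by linarith) hq.le,
        mul_le_mul_of_nonneg_left (show q'' - j ≤ q'' by linarith) (show (0:ℤ) ≤ cc by linarith),
        mul_le_mul_of_nonneg_left hmon (show (0:ℤ) ≤ cc by linarith)]
    nlinarith

/-- `W₀ = 0`, `W₁ = 0^{c₁-1}1`, and for `k ≥ 2`:
`W_k = W_{k-2} · W_{k-1}^{c_k}` if `k` is even, and `W_k = W_{k-1}^{c_k} · W_{k-2}`
if `k` is odd. -/
theorem sturmWord_recursion (c : ℕ → ℕ) (hc : ∀ k, 1 ≤ k → 1 ≤ c k) :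
    sturmWord c 0 = [0] ∧
    sturmWord c 1 = List.replicate (c 1 - 1) 0 ++ [1] ∧
    ∀ k, 2 ≤ k →
      (Even k → sturmWord c k =
        sturmWord c (k - 2) ++ (List.replicate (c k) (sturmWord c (k - 1))).flatten) ∧
      (¬ Even k → sturmWord c k =
        (List.replicate (c k) (sturmWord c (k - 1))).flatten ++ sturmWord c (k - 2)) := by
  have hword : ∀ k, sturmWord c k =
      (List.range (qConv c (k+1)).toNat).map (letter (pConv c (k+1)) (qConv c (k+1))) :=
    fun k => by
      unfold sturmWord letter
      simp only [bind_pure_comp, List.map_eq_map, List.map_map]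
      rfl
  refine ⟨?_, ?_, ?_⟩
  · -- W₀ = [0]
    rw [hword 0]
    norm_num [qConv, pConv, List.range_succ, letter]
  · -- W₁ = 0^{c₁-1} 1
    have hp2 : pConv c 2 = 1 := by
      show (c 1 : ℤ) * pConv c 1 + pConv c 0 = 1
      norm_num [pConv]
    have hq2 : qConv c 2 = (c 1 : ℤ) := by
      show (c 1 : ℤ) * qConv c 1 + qConv c 0 = (c 1 : ℤ)
      norm_num [qConv]
    obtain ⟨m, hm⟩ : ∃ m, c 1 = m + 1 := ⟨c 1 - 1, by have := hc 1 le_rfl; omega⟩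
    rw [hword 1, hp2, hq2, hm]
    have htn : (((m+1 : ℕ) : ℤ)).toNat = m + 1 := by simp
    rw [htn, List.range_succ, List.map_append, show (m+1) - 1 = m from rfl]
    have hqpos : (0:ℤ) < ((m+1 : ℕ) : ℤ) := by positivity
    have hzero : ∀ i : ℕ, i < m + 1 → ⌊((i:ℕ) : ℚ) * ((1:ℤ) : ℚ) / (((m+1:ℕ):ℤ) : ℚ)⌋ = 0 := by
      intro i hi
      have hc1 : ((i:ℕ) : ℚ) = (((i:ℕ) : ℤ) : ℚ) := by push_cast; ring
      rw [hc1]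
      exact fl_eq i 1 ((m+1:ℕ):ℤ) 0 hqpos (by simp) (by push_cast; omega)
    congr 1
    · rw [List.eq_replicate_iff]
      constructor
      · simp
      · intro b hb
        simp only [List.mem_map, List.mem_range] at hb
        obtain ⟨i, hi, rfl⟩ := hb
        unfold letter
        have hc1 : ((i:ℕ) : ℚ) + 1 = (((i+1:ℕ)) : ℚ) := by push_cast; ring
        rw [hc1, hzero (i+1) (by omega), hzero i (by omega)]
        ring
    · simp only [List.map_cons, List.map_nil]
      congr 1
      unfold letter
      have hc1 : ((m:ℕ) : ℚ) + 1 = (((m+1:ℕ)) : ℚ) := by push_cast; ring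
      have hone : ⌊(((m+1:ℕ)) : ℚ) * ((1:ℤ) : ℚ) / (((m+1:ℕ):ℤ) : ℚ)⌋ = 1 := by
        have hc2 : (((m+1:ℕ)) : ℚ) = ((((m+1:ℕ)) : ℤ) : ℚ) := by push_cast; ring
        rw [hc2]
        exact fl_eq ((m+1:ℕ):ℤ) 1 ((m+1:ℕ):ℤ) 1 hqpos (by push_cast; omega) (by push_cast; omega)
      rw [hc1, hone, hzero m (by omega)]
      ring
  · -- the recursion
    rintro k hk
    obtain ⟨k', rfl⟩ : ∃ k', k = k' + 2 := ⟨k - 2, by omega⟩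
    have h2 : k' + 2 - 2 = k' := rfl
    have h1 : k' + 2 - 1 = k' + 1 := rfl
    rw [h2, h1]
    set p := pConv c (k'+3) with hpdef
    set q := qConv c (k'+3) with hqdef
    set p' := pConv c (k'+2) with hp'def
    set q' := qConv c (k'+2) with hq'def
    set p'' := pConv c (k'+1) with hp''def
    set q'' := qConv c (k'+1) with hq''def
    set cc : ℤ := (c (k'+2) : ℤ) with hccdef
    have hq : 0 < q := qConv_pos c hc (k'+2)
    have hq' : 0 < q' := qConv_pos c hc (k'+1)
    have hq'' : 0 < q'' := qConv_pos c hc k'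
    have hmon : q'' ≤ q' := qConv_mono c hc k'
    have hcc : 1 ≤ cc := by rw [hccdef]; exact_mod_cast hc (k'+2) (by omega)
    have hrecq : q = cc * q' + q'' := rfl
    have hrecp : p = cc * p' + p'' := rfl
    have d2 : p * q' - p' * q = (-1:ℤ)^(k'+3) := detConv c (k'+2)
    have d1 : p' * q'' - p'' * q' = (-1:ℤ)^(k'+2) := detConv c (k'+1)
    have hq'n : ((q'.toNat : ℤ)) = q' := Int.toNat_of_nonneg hq'.le
    have hq''n : ((q''.toNat : ℤ)) = q'' := Int.toNat_of_nonneg hq''.le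
    have hqn : ((q.toNat : ℤ)) = q := Int.toNat_of_nonneg hq.le
    have hr1 : ((q'.toNat : ℚ)) = (q' : ℚ) := by exact_mod_cast congrArg (Int.cast : ℤ → ℚ) hq'n
    have hr2 : ((q''.toNat : ℚ)) = (q'' : ℚ) := by exact_mod_cast congrArg (Int.cast : ℤ → ℚ) hq''n
    constructor
    · -- even case
      intro hEven
      have hk'even : Even k' := by
        rcases hEven with ⟨t, ht⟩; exact ⟨t-1, by omega⟩
      obtain ⟨a, ha⟩ := hk'even
      have e1 : p * q' - p' * q = -1 := by
        rw [d2]; exact Odd.neg_one_pow ⟨a+1, by omega⟩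
      have ed1 : p' * q'' - p'' * q' = 1 := by
        rw [d1]; exact Even.neg_one_pow ⟨a+1, by omega⟩
      have e2 : p * q'' - p'' * q = cc := by
        linear_combination q'' * hrecp - p'' * hrecq + cc * ed1
      -- floor formulas in ℕ form
      have hCn : ∀ j : ℕ, j ≤ q''.toNat →
          ⌊((j:ℕ) : ℚ) * (p:ℚ) / (q:ℚ)⌋ = 0 + ⌊((j:ℕ) : ℚ) * (p'':ℚ) / (q'':ℚ)⌋ := by
        intro j hj
        have hj' : (j:ℤ) ≤ q'' := by rw [← hq''n]; exact_mod_cast hj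
        have hcast : ((j:ℕ) : ℚ) = (((j:ℤ)) : ℚ) := (Int.cast_natCast j).symm
        rw [hcast, zero_add]
        exact floorC p q p' q' p'' q'' cc j _ hq hq' hq'' hmon hrecq hcc e2
          (Int.natCast_nonneg j) hj' (fl_lb j p'' q'' hq'') (fl_ub j p'' q'' hq'')
      have hDn : ∀ m j : ℕ, m + 1 ≤ c (k'+2) → j ≤ q'.toNat →
          ⌊(((q''.toNat + m * q'.toNat) + j : ℕ) : ℚ) * (p:ℚ) / (q:ℚ)⌋ =
            (p'' + (m:ℤ) * p') + ⌊((j:ℕ) : ℚ) * (p':ℚ) / (q':ℚ)⌋ := by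
        intro m j hm hj
        have hm' : (m:ℤ) ≤ cc - 1 := by
          have : (m:ℤ) + 1 ≤ cc := by rw [hccdef]; exact_mod_cast hm
          linarith
        have hj' : (j:ℤ) ≤ q' := by rw [← hq'n]; exact_mod_cast hj
        have hcast : (((q''.toNat + m * q'.toNat) + j : ℕ) : ℚ) =
            (((q'' + (m:ℤ) * q' + j : ℤ)) : ℚ) := by push_cast [hr1, hr2]; ring
        have hcastj : ((j:ℕ) : ℚ) = (((j:ℤ)) : ℚ) := (Int.cast_natCast j).symm
        rw [hcast, hcastj]
        exact floorD p q p' q' p'' q'' cc m j _ hq hq' hq'' hrecq e1 e2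
          (Int.natCast_nonneg m) hm' (Int.natCast_nonneg j) hj'
          (fl_lb j p' q' hq') (fl_ub j p' q' hq')
      have hlen : q.toNat = q''.toNat + (c (k'+2)) * q'.toNat := by
        have : (q.toNat : ℤ) = ((q''.toNat + (c (k'+2)) * q'.toNat : ℕ) : ℤ) := by
          push_cast [hqn, hq''n, hq'n]
          linarith [hrecq, hccdef]
        exact_mod_cast this
      rw [hword (k'+2), hlen, List.range_add, List.map_append, List.map_map]
      congr 1
      · -- prefix equals sturmWord c k'
        rw [hword k']
        have := map_letter_seg p q p'' q'' 0 0 q''.toNat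
          (fun j hj => by simpa using hCn j hj)
        simpa only [zero_add] using this
      · -- middle equals flatten of replicate
        rw [hword (k'+1)]
        have aux : ∀ t : ℕ, t ≤ c (k'+2) →
            (List.range (t * q'.toNat)).map (fun x => letter p q (q''.toNat + x)) =
              (List.replicate t ((List.range q'.toNat).map (letter p' q'))).flatten := by
          intro t ht
          induction t with
          | zero => simp
          | succ t ih =>
            rw [show (t+1) * q'.toNat = t * q'.toNat + q'.toNat from by ring, List.range_add,
                List.map_append, List.map_map, ih (by omega), List.replicate_succ',
                List.flatten_append]
            congr 1
            · have hfun : ((fun x => letter p q (q''.toNat + x)) ∘ fun x => t * q'.toNat + x)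
                  = fun j => letter p q ((q''.toNat + t * q'.toNat) + j) := by
                funext x; simp [Function.comp]; ring_nf
              rw [hfun]
              have := map_letter_seg p q p' q' (p'' + (t:ℤ) * p') (q''.toNat + t * q'.toNat)
                q'.toNat (fun j hj => hDn t j ht hj)
              simpa using this
        have hcomp : (letter p q ∘ fun x => q''.toNat + x) =
            fun x => letter p q (q''.toNat + x) := rfl
        rw [hcomp]
        exact aux (c (k'+2)) le_rfl
    · -- odd case
      intro hOdd
      have hk'odd : ¬ Even k' := by
        intro ⟨t, ht⟩; exact hOdd ⟨t+1, by omega⟩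
      obtain ⟨a, ha⟩ := Nat.not_even_iff_odd.mp hk'odd
      have e1 : p * q' - p' * q = 1 := by
        rw [d2]; exact Even.neg_one_pow ⟨a+2, by omega⟩
      have ed1 : p' * q'' - p'' * q' = -1 := by
        rw [d1]; exact Odd.neg_one_pow ⟨a+1, by omega⟩
      have e2 : p * q'' - p'' * q = -cc := by
        linear_combination q'' * hrecp - p'' * hrecq + cc * ed1
      have hAn : ∀ m j : ℕ, m + 1 ≤ c (k'+2) → j ≤ q'.toNat →
          ⌊((m * q'.toNat + j : ℕ) : ℚ) * (p:ℚ) / (q:ℚ)⌋ =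
            ((m:ℤ) * p') + ⌊((j:ℕ) : ℚ) * (p':ℚ) / (q':ℚ)⌋ := by
        intro m j hm hj
        have hm' : (m:ℤ) ≤ cc - 1 := by
          have : (m:ℤ) + 1 ≤ cc := by rw [hccdef]; exact_mod_cast hm
          linarith
        have hj' : (j:ℤ) ≤ q' := by rw [← hq'n]; exact_mod_cast hj
        have hcast : ((m * q'.toNat + j : ℕ) : ℚ) = ((((m:ℤ) * q' + j : ℤ)) : ℚ) := by
          push_cast [hr1]; ring
        have hcastj : ((j:ℕ) : ℚ) = (((j:ℤ)) : ℚ) := (Int.cast_natCast j).symm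
        rw [hcast, hcastj]
        exact floorA p q p' q' cc m j _ hq hq' (by rw [hrecq]; ring_nf; linarith) e1
          (Int.natCast_nonneg m) hm' (Int.natCast_nonneg j) hj'
          (fl_lb j p' q' hq') (fl_ub j p' q' hq')
      have hBn : ∀ j : ℕ, j ≤ q''.toNat →
          ⌊(((c (k'+2)) * q'.toNat + j : ℕ) : ℚ) * (p:ℚ) / (q:ℚ)⌋ =
            (cc * p') + ⌊((j:ℕ) : ℚ) * (p'':ℚ) / (q'':ℚ)⌋ := by
        intro j hj
        have hj' : (j:ℤ) ≤ q'' := by rw [← hq''n]; exact_mod_cast hj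
        have hcast : (((c (k'+2)) * q'.toNat + j : ℕ) : ℚ) = (((cc * q' + j : ℤ)) : ℚ) := by
          push_cast [hr1, hccdef]; ring_nf
        have hcastj : ((j:ℕ) : ℚ) = (((j:ℤ)) : ℚ) := (Int.cast_natCast j).symm
        rw [hcast, hcastj]
        exact floorB p q p' q' p'' q'' cc j _ hq hq' hq'' hmon hrecq hcc e1 e2
          (Int.natCast_nonneg j) hj' (fl_lb j p'' q'' hq'') (fl_ub j p'' q'' hq'')
      have hlen : q.toNat = (c (k'+2)) * q'.toNat + q''.toNat := by
        have : (q.toNat : ℤ) = (((c (k'+2)) * q'.toNat + q''.toNat : ℕ) : ℤ) := by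
          push_cast [hqn, hq''n, hq'n]
          linarith [hrecq, hccdef]
        exact_mod_cast this
      rw [hword (k'+2), hlen, List.range_add, List.map_append, List.map_map]
      congr 1
      · -- leading blocks
        rw [hword (k'+1)]
        have aux : ∀ t : ℕ, t ≤ c (k'+2) →
            (List.range (t * q'.toNat)).map (letter p q) =
              (List.replicate t ((List.range q'.toNat).map (letter p' q'))).flatten := by
          intro t ht
          induction t with
          | zero => simp
          | succ t ih =>
            rw [show (t+1) * q'.toNat = t * q'.toNat + q'.toNat from by ring, List.range_add,
                List.map_append, List.map_map, ih (by omega), List.replicate_succ',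
                List.flatten_append]
            congr 1
            · have hfun : (letter p q ∘ fun x => t * q'.toNat + x)
                  = fun j => letter p q (t * q'.toNat + j) := rfl
              rw [hfun]
              have := map_letter_seg p q p' q' ((t:ℤ) * p') (t * q'.toNat)
                q'.toNat (fun j hj => hAn t j ht hj)
              simpa using this
        exact aux (c (k'+2)) le_rfl
      · -- suffix equals sturmWord c k'
        rw [hword k']
        have hcomp : (letter p q ∘ fun x => (c (k'+2)) * q'.toNat + x) =
            fun j => letter p q ((c (k'+2)) * q'.toNat + j) := rfl
        rw [hcomp]
        have := map_letter_seg p q p'' q'' (cc * p') ((c (k'+2)) * q'.toNat)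
          q''.toNat (fun j hj => hBn j hj)
        exact this
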